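/- Let f be a multivariate real polynomial in n variables with total degree d > 0 whose leading form f_d is positive definite, i.e. f_d(x) > 0 for every x ∈ ℝ^n with x ≠ 0. Then f attains its minimum over ℤ^n (there exists x* ∈ ℤ^n with f(x*) ≤ f(y) for all y ∈ ℤ^n) and f attains its minimum over ℝ^n (there exists x' ∈ ℝ^n with f(x') ≤ f(y) for all y ∈ ℝ^n). -/
import Mathlib


open MvPolynomial

lemma aux_eval_smul_of_isHomogeneous {n : ℕ} {φ : MvPolynomial (Fin n) ℝ} {m : ℕ}
    (hφ : φ.IsHomogeneous m) (c : ℝ) (x : Fin n → ℝ) :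
    eval (c • x) φ = c ^ m * eval x φ := by
  rw [eval_eq', eval_eq', Finset.mul_sum]
  refine Finset.sum_congr rfl fun d hd => ?_
  have hdm : ∑ i, d i = m := by
    have h := hφ (MvPolynomial.mem_support_iff.mp hd)
    rw [Finsupp.weight_apply] at h
    simp only [Pi.one_apply, smul_eq_mul, mul_one] at h
    rw [← h, Finsupp.sum]
    exact (Finset.sum_subset (Finset.subset_univ _) fun i _ hi =>
      Finsupp.notMem_support_iff.mp hi).symm
  rw [← hdm]
  simp only [Pi.smul_apply, smul_eq_mul, mul_pow]
  rw [Finset.prod_mul_distrib, Finset.prod_pow_eq_pow_sum]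
  ring

theorem exists_integer_and_continuous_minimizer_of_posdef_leading_form
    {n : ℕ} (f : MvPolynomial (Fin n) ℝ) (d : ℕ)
    (hd : d = f.totalDegree) (hd0 : 0 < d)
    (hpd : ∀ x : Fin n → ℝ, x ≠ 0 →
      0 < eval x (homogeneousComponent d f)) :
    (∃ x' : Fin n → ℤ, ∀ y : Fin n → ℤ,
      eval (fun i => (x' i : ℝ)) f ≤ eval (fun i => (y i : ℝ)) f) ∧
    (∃ x'' : Fin n → ℝ, ∀ y : Fin n → ℝ, eval x'' f ≤ eval y f) := by
  classical
  rcases Nat.eq_zero_or_pos n with hn | hn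
  · subst hn
    refine ⟨⟨0, fun y => ?_⟩, ⟨0, fun y => ?_⟩⟩
    · have h : (fun i => (((0 : Fin 0 → ℤ)) i : ℝ)) = fun i => (y i : ℝ) :=
        Subsingleton.elim _ _
      rw [h]
    · rw [Subsingleton.elim (0 : Fin 0 → ℝ) y]
  haveI : Nonempty (Fin n) := ⟨⟨0, hn⟩⟩
  set g : ℕ → MvPolynomial (Fin n) ℝ := fun j => homogeneousComponent j f with hg
  have hhom : ∀ j, (g j).IsHomogeneous j := fun j => homogeneousComponent_isHomogeneous j f
  have decomp : ∀ x : Fin n → ℝ, eval x f = ∑ j ∈ Finset.range (d + 1), eval x (g j) := by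
    intro x
    conv_lhs => rw [← MvPolynomial.sum_homogeneousComponent f]
    rw [← hd, map_sum]
  -- the unit sphere
  have hS : IsCompact (Metric.sphere (0 : Fin n → ℝ) 1) := isCompact_sphere 0 1
  have hSne : (Metric.sphere (0 : Fin n → ℝ) 1).Nonempty := by
    refine ⟨fun _ => 1, ?_⟩
    simp [mem_sphere_zero_iff_norm, pi_norm_const]
  -- minimum of leading form on sphere
  obtain ⟨a, haS, ha⟩ := hS.exists_isMinOn hSne
    (MvPolynomial.continuous_eval (p := g d)).continuousOn
  have ha0 : a ≠ 0 := by
    intro h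
    have h1 := mem_sphere_zero_iff_norm.mp haS
    rw [h] at h1; simp at h1
  set c : ℝ := eval a (g d) with hc
  have hcpos : 0 < c := hpd a ha0
  -- bound for the lower-order terms on the sphere
  obtain ⟨b, hbS, hb⟩ := hS.exists_isMaxOn hSne
    (by continuity : Continuous fun x => ∑ j ∈ Finset.range d, |eval x (g j)|).continuousOn
  set C : ℝ := ∑ j ∈ Finset.range d, |eval b (g j)| with hC
  have hC0 : 0 ≤ C := Finset.sum_nonneg fun _ _ => abs_nonneg _
  set M : ℝ := max (eval 0 f + 1) 0 with hM
  have hM0 : 0 ≤ M := le_max_right _ _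
  have hMf : eval 0 f + 1 ≤ M := le_max_left _ _
  set R : ℝ := max 1 ((C + M) / c) with hR
  have hR1 : (1 : ℝ) ≤ R := le_max_left _ _
  -- key coercivity estimate
  have key : ∀ x : Fin n → ℝ, R ≤ ‖x‖ → eval 0 f + 1 ≤ eval x f := by
    intro x hx
    set r : ℝ := ‖x‖ with hr
    have hr1 : (1 : ℝ) ≤ r := le_trans hR1 hx
    have hr0 : r ≠ 0 := by positivity
    set u : Fin n → ℝ := r⁻¹ • x with hu
    have hxu : x = r • u := by rw [hu, smul_inv_smul₀ hr0]
    have huS : u ∈ Metric.sphere (0 : Fin n → ℝ) 1 := by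
      rw [mem_sphere_zero_iff_norm, hu, norm_smul, norm_inv, norm_norm, ← hr,
        inv_mul_cancel₀ hr0]
    have heval : ∀ j, eval x (g j) = r ^ j * eval u (g j) := by
      intro j
      rw [hxu, aux_eval_smul_of_isHomogeneous (hhom j)]
    have hsum : eval x f = r ^ d * eval u (g d) + ∑ j ∈ Finset.range d, r ^ j * eval u (g j) := by
      rw [decomp x, Finset.sum_range_succ]
      simp_rw [heval]; ring
    have hlow : -(r ^ (d - 1) * C) ≤ ∑ j ∈ Finset.range d, r ^ j * eval u (g j) := by
      have h1 : ∀ j ∈ Finset.range d, -(r ^ (d - 1) * |eval u (g j)|) ≤ r ^ j * eval u (g j) := by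
        intro j hj
        have hj' : j ≤ d - 1 := Nat.le_sub_one_of_lt (Finset.mem_range.mp hj)
        have hpow : r ^ j ≤ r ^ (d - 1) := pow_le_pow_right₀ hr1 hj'
        have h2 : r ^ j * |eval u (g j)| ≤ r ^ (d - 1) * |eval u (g j)| :=
          mul_le_mul_of_nonneg_right hpow (abs_nonneg _)
        have h3 : -(r ^ j * |eval u (g j)|) ≤ r ^ j * eval u (g j) := by
          rw [neg_le]
          calc -(r ^ j * eval u (g j)) ≤ |r ^ j * eval u (g j)| := neg_le_abs _
            _ = r ^ j * |eval u (g j)| := by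
                rw [abs_mul, abs_of_nonneg (by positivity : (0:ℝ) ≤ r ^ j)]
        linarith
      have hsumabs : ∑ j ∈ Finset.range d, |eval u (g j)| ≤ C := hb huS
      have hpow0 : (0:ℝ) ≤ r ^ (d - 1) := by positivity
      calc -(r ^ (d - 1) * C)
          ≤ -(r ^ (d - 1) * ∑ j ∈ Finset.range d, |eval u (g j)|) :=
            neg_le_neg (mul_le_mul_of_nonneg_left hsumabs hpow0)
        _ = ∑ j ∈ Finset.range d, -(r ^ (d - 1) * |eval u (g j)|) := by
            rw [Finset.mul_sum, ← Finset.sum_neg_distrib]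
        _ ≤ ∑ j ∈ Finset.range d, r ^ j * eval u (g j) := Finset.sum_le_sum h1
    have h4 : c ≤ eval u (g d) := ha huS
    have hrc : C + M ≤ r * c := by
      have h5 : (C + M) / c ≤ r := le_trans (le_max_right _ _) hx
      calc C + M = ((C + M) / c) * c := by field_simp
        _ ≤ r * c := mul_le_mul_of_nonneg_right h5 hcpos.le
    have hpd1 : (1:ℝ) ≤ r ^ (d - 1) := one_le_pow₀ hr1
    have hrd : r ^ d = r ^ (d - 1) * r := by
      rw [← pow_succ, Nat.sub_add_cancel hd0]
    have hpowd : (0:ℝ) ≤ r ^ d := by positivity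
    calc eval 0 f + 1 ≤ M := hMf
      _ ≤ r * c - C := by linarith
      _ ≤ r ^ (d - 1) * (r * c - C) := le_mul_of_one_le_left (by linarith) hpd1
      _ = r ^ d * c - r ^ (d - 1) * C := by rw [hrd]; ring
      _ ≤ r ^ d * eval u (g d) - r ^ (d - 1) * C := by
          nlinarith
      _ ≤ eval x f := by rw [hsum]; linarith
  constructor
  · -- integer minimizer
    set ι : (Fin n → ℤ) → (Fin n → ℝ) := fun y i => (y i : ℝ) with hι
    have hι0 : ι 0 = 0 := by funext i; simp [hι]
    set T : Set (Fin n → ℤ) := {y | eval (ι y) f ≤ eval (ι 0) f} with hT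
    have hT0 : (0 : Fin n → ℤ) ∈ T := by
      show eval (ι 0) f ≤ eval (ι 0) f
      exact le_refl _
    have hTfin : T.Finite := by
      have hsub : T ⊆ Set.pi Set.univ fun _ : Fin n => (Set.Icc (-⌈R⌉) ⌈R⌉ : Set ℤ) := by
        intro y hy i _
        have hnorm : ‖ι y‖ < R := by
          by_contra hcon
          push_neg at hcon
          have hkey := key (ι y) hcon
          have hy' : eval (ι y) f ≤ eval (ι 0) f := hy
          rw [hι0] at hy'
          linarith
        have habs : |(y i : ℝ)| ≤ ‖ι y‖ := by
          have := norm_le_pi_norm (ι y) i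
          simpa [hι, Real.norm_eq_abs] using this
        have h6 : |(y i : ℝ)| ≤ R := le_trans habs hnorm.le
        have h7 : (y i : ℝ) ≤ (⌈R⌉ : ℝ) := le_trans (le_of_abs_le h6) (Int.le_ceil R)
        have h8 : -(⌈R⌉ : ℝ) ≤ (y i : ℝ) := by
          have := neg_le_of_abs_le h6
          have := Int.le_ceil R
          linarith
        constructor
        · exact_mod_cast h8
        · exact_mod_cast h7
      exact Set.Finite.subset (Set.Finite.pi fun _ => Set.finite_Icc _ _) hsub
    obtain ⟨x', hx'T, hmin⟩ := Set.exists_min_image T (fun y => eval (ι y) f) hTfin ⟨0, hT0⟩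
    refine ⟨x', fun y => ?_⟩
    by_cases hy : y ∈ T
    · exact hmin y hy
    · have h9 : eval (ι 0) f < eval (ι y) f := lt_of_not_ge hy
      have h10 : eval (ι x') f ≤ eval (ι 0) f := hx'T
      exact le_of_lt (lt_of_le_of_lt h10 h9)
  · -- real minimizer
    refine (MvPolynomial.continuous_eval f).exists_forall_le' 0 ?_
    have hev : ∀ᶠ x : Fin n → ℝ in Filter.cocompact _, R ≤ ‖x‖ :=
      tendsto_norm_cocompact_atTop.eventually_ge_atTop R
    exact hev.mono fun x hx => by linarith [key x hx]
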